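/- Let ρ : ℝ → ℝ be differentiable on (0, ∞) with ρ(t) > 0, ρ'(t) ≥ 0, and t·ρ'(t) ≤ ρ(t) for all t > 0. Then for every x₁ ∈ (0, 1), setting s := 4x₁/(1 + x₁)², the function t ↦ ρ(4t/(1 + t)²) is differentiable at x₁ and 0 ≤ x₁ · (d/dt)[ρ(4t/(1 + t)²)]|_{t = x₁} / ρ(s) ≤ (1 − x₁)/(1 + x₁); in particular this quantity is strictly less than 1. -/

import Mathlib

/-- If `ρ` is differentiable on `(0,∞)` with `ρ > 0`, `ρ' ≥ 0` and `t ρ'(t) ≤ ρ(t)`, then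
for `x₁ ∈ (0,1)`, with `s = 4x₁/(1+x₁)²`, the function `t ↦ ρ(4t/(1+t)²)` is differentiable
at `x₁` and `0 ≤ x₁ · (d/dt)[ρ(4t/(1+t)²)]|_{x₁} / ρ(s) ≤ (1-x₁)/(1+x₁) < 1`. -/
theorem stmt_12 (ρ : ℝ → ℝ)
    (hdiff : ∀ t : ℝ, 0 < t → DifferentiableAt ℝ ρ t)
    (hpos : ∀ t : ℝ, 0 < t → 0 < ρ t)
    (hmono : ∀ t : ℝ, 0 < t → 0 ≤ deriv ρ t)
    (hconc : ∀ t : ℝ, 0 < t → t * deriv ρ t ≤ ρ t) :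
    ∀ x₁ ∈ Set.Ioo (0 : ℝ) 1,
      DifferentiableAt ℝ (fun t : ℝ => ρ (4 * t / (1 + t) ^ 2)) x₁ ∧
      0 ≤ x₁ * deriv (fun t : ℝ => ρ (4 * t / (1 + t) ^ 2)) x₁ /
          ρ (4 * x₁ / (1 + x₁) ^ 2) ∧
      x₁ * deriv (fun t : ℝ => ρ (4 * t / (1 + t) ^ 2)) x₁ /
          ρ (4 * x₁ / (1 + x₁) ^ 2) ≤ (1 - x₁) / (1 + x₁) ∧
      x₁ * deriv (fun t : ℝ => ρ (4 * t / (1 + t) ^ 2)) x₁ /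
          ρ (4 * x₁ / (1 + x₁) ^ 2) < 1 := by
  intro x₁ hx
  obtain ⟨hx0, hx1⟩ := hx
  have h1x : (0:ℝ) < 1 + x₁ := by linarith
  set s : ℝ := 4 * x₁ / (1 + x₁) ^ 2 with hs
  have hspos : 0 < s := by positivity
  -- derivative of inner function
  have hg : HasDerivAt (fun t : ℝ => 4 * t / (1 + t) ^ 2)
      ((4 * (1 + x₁) ^ 2 - 4 * x₁ * (2 * (1 + x₁))) / ((1 + x₁) ^ 2) ^ 2) x₁ := by
    have hnum : HasDerivAt (fun t : ℝ => 4 * t) 4 x₁ := by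
      simpa using (hasDerivAt_id x₁).const_mul 4
    have hden : HasDerivAt (fun t : ℝ => (1 + t) ^ 2) (2 * (1 + x₁)) x₁ := by
      have : HasDerivAt (fun t : ℝ => 1 + t) 1 x₁ := by
        simpa using (hasDerivAt_id x₁).const_add 1
      simpa using this.fun_pow 2
    have := hnum.fun_div hden (by positivity)
    simpa [mul_comm] using this
  have hg' : (4 * (1 + x₁) ^ 2 - 4 * x₁ * (2 * (1 + x₁))) / ((1 + x₁) ^ 2) ^ 2
      = 4 * (1 - x₁) / (1 + x₁) ^ 3 := by
    field_simp
    ring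
  rw [hg'] at hg
  have hcomp : HasDerivAt (fun t : ℝ => ρ (4 * t / (1 + t) ^ 2))
      (deriv ρ s * (4 * (1 - x₁) / (1 + x₁) ^ 3)) x₁ :=
    ((hdiff s hspos).hasDerivAt.comp x₁ hg)
  have hD : deriv (fun t : ℝ => ρ (4 * t / (1 + t) ^ 2)) x₁
      = deriv ρ s * (4 * (1 - x₁) / (1 + x₁) ^ 3) := hcomp.deriv
  refine ⟨hcomp.differentiableAt, ?_, ?_, ?_⟩
  · rw [hD]
    have h := hmono s hspos
    have hρ := (hpos s hspos).le
    have hx1' : (0:ℝ) ≤ 1 - x₁ := by linarith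
    have h := hmono s hspos
    have hnn : 0 ≤ x₁ * (deriv ρ s * (4 * (1 - x₁) / (1 + x₁) ^ 3)) := by
      apply mul_nonneg hx0.le
      apply mul_nonneg h
      positivity
    exact div_nonneg hnn hρ
  · rw [hD]
    have hρ := hpos s hspos
    rw [div_le_div_iff₀ hρ h1x]
    have hkey : s * deriv ρ s ≤ ρ s := hconc s hspos
    have hd : 0 ≤ deriv ρ s := hmono s hspos
    have hx1' : 0 ≤ 1 - x₁ := by linarith
    have hrw : x₁ * (deriv ρ s * (4 * (1 - x₁) / (1 + x₁) ^ 3)) * (1 + x₁)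
        = (s * deriv ρ s) * (1 - x₁) := by
      rw [hs]; field_simp
    rw [hrw]
    calc (s * deriv ρ s) * (1 - x₁) ≤ ρ s * (1 - x₁) := by
          exact mul_le_mul_of_nonneg_right hkey hx1'
      _ = (1 - x₁) * ρ s := by ring
  · have hlt : (1 - x₁) / (1 + x₁) < 1 := by
      rw [div_lt_one h1x]; linarith
    -- reuse the previous bound
    have hρ := hpos s hspos
    have hkey : s * deriv ρ s ≤ ρ s := hconc s hspos
    have hd : 0 ≤ deriv ρ s := hmono s hspos
    have hx1' : 0 ≤ 1 - x₁ := by linarith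
    rw [hD]
    have hle : x₁ * (deriv ρ s * (4 * (1 - x₁) / (1 + x₁) ^ 3)) / ρ s
        ≤ (1 - x₁) / (1 + x₁) := by
      rw [div_le_div_iff₀ hρ h1x]
      have hrw : x₁ * (deriv ρ s * (4 * (1 - x₁) / (1 + x₁) ^ 3)) * (1 + x₁)
          = (s * deriv ρ s) * (1 - x₁) := by
        rw [hs]; field_simp
      rw [hrw]
      calc (s * deriv ρ s) * (1 - x₁) ≤ ρ s * (1 - x₁) :=
            mul_le_mul_of_nonneg_right hkey hx1'
        _ = (1 - x₁) * ρ s := by ring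
    linarith
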